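/- Consider the discrete-time optimal control problem: minimize J(u) = ‖x_m(u)‖² + ε ∑_{k=0}^{m−1} ‖u_k‖² over control sequences u = (u_0,…,u_{m−1}) ∈ (ℝ^p)^m, where x_0(u) = x_0 and x_{k+1}(u) = f_k(x_k(u), u_k). If each f_k is differentiable and u* is a local minimizer of J, then for every k ∈ {0,…,m−1} the optimal control satisfies the explicit formula u*_k = −(1/ε) (D_u f_k)ᵀ (D_x f_{k+1})ᵀ (D_x f_{k+2})ᵀ ⋯ (D_x f_{m−1})ᵀ x_m(u*); equivalently, u*_k = −(1/ε) (D_u f_k)ᵀ applied to the adjoint of the composition D_x f_{m−1} ∘ ⋯ ∘ D_x f_{k+1} evaluated at x_m(u*), where all partial derivatives are taken along the trajectory of u* (for k = m−1 the product of state Jacobians is the identity). -/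

import Mathlib

/-!
STATEMENT 1: Explicit product form of the worst-case control (Theorem 1 of the paper):
u*_k = −(1/ε) (D_u f_k)ᵀ (D_x f_{m−1} ∘ ⋯ ∘ D_x f_{k+1})ᵀ x_m(u*).
-/

noncomputable section

open scoped BigOperators

/-- The trajectory `x_k(u)` generated by the dynamics `x_{k+1} = f_k(x_k, u_k)`. -/
def traj {n p : ℕ}
    (f : ℕ → EuclideanSpace ℝ (Fin n) × EuclideanSpace ℝ (Fin p) → EuclideanSpace ℝ (Fin n))
    (x0 : EuclideanSpace ℝ (Fin n)) (u : ℕ → EuclideanSpace ℝ (Fin p)) :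
    ℕ → EuclideanSpace ℝ (Fin n)
  | 0 => x0
  | k + 1 => f k (traj f x0 u k, u k)

/-- Extension of a finite control sequence `u : (ℝ^p)^m` to all of `ℕ` (by `0`). -/
def extCtrl {p : ℕ} (m : ℕ) (u : Fin m → EuclideanSpace ℝ (Fin p)) :
    ℕ → EuclideanSpace ℝ (Fin p) :=
  fun k => if h : k < m then u ⟨k, h⟩ else 0

/-- The cost `J(u) = ‖x_m(u)‖² + ε ∑_{k=0}^{m-1} ‖u_k‖²`. -/
def cost {n p : ℕ} (m : ℕ)
    (f : ℕ → EuclideanSpace ℝ (Fin n) × EuclideanSpace ℝ (Fin p) → EuclideanSpace ℝ (Fin n))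
    (x0 : EuclideanSpace ℝ (Fin n)) (ε : ℝ)
    (u : Fin m → EuclideanSpace ℝ (Fin p)) : ℝ :=
  ‖traj f x0 (extCtrl m u) m‖ ^ 2 + ε * ∑ k : Fin m, ‖u k‖ ^ 2

/-- `jacProd D a b = D_{b-1} ∘ D_{b-2} ∘ ⋯ ∘ D_a` (the identity if `b ≤ a`):
the ordered product of the state Jacobians from index `a` up to `b - 1`. -/
def jacProd {E : Type*} [NormedAddCommGroup E] [NormedSpace ℝ E]
    (D : ℕ → E →L[ℝ] E) (a : ℕ) : ℕ → E →L[ℝ] E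
  | 0 => ContinuousLinearMap.id ℝ E
  | b + 1 => if a ≤ b then (D b).comp (jacProd D a b) else ContinuousLinearMap.id ℝ E

section MyAux
open ContinuousLinearMap

variable {n p : ℕ}
  {f : ℕ → EuclideanSpace ℝ (Fin n) × EuclideanSpace ℝ (Fin p) → EuclideanSpace ℝ (Fin n)}
  {x0 : EuclideanSpace ℝ (Fin n)}

lemma traj_congr {u u' : ℕ → EuclideanSpace ℝ (Fin p)} :
    ∀ j, (∀ i, i < j → u i = u' i) → traj f x0 u j = traj f x0 u' j
  | 0, _ => rfl
  | j+1, h => by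
      simp only [traj]
      rw [traj_congr j fun i hi => h i (Nat.lt_succ_of_lt hi), h j (Nat.lt_succ_self j)]

lemma traj_deriv {m : ℕ} (hf : ∀ k < m, Differentiable ℝ (f k))
    (U : ℕ → EuclideanSpace ℝ (Fin p)) (k : ℕ) (hk : k < m) :
    ∀ b, k < b → b ≤ m →
      HasFDerivAt (fun v => traj f x0 (Function.update U k v) b)
        ((jacProd (fun j => fderiv ℝ (fun y => f j (y, U j)) (traj f x0 U j)) (k+1) b).comp
          (fderiv ℝ (fun v => f k (traj f x0 U k, v)) (U k))) (U k) := by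
  intro b
  induction b with
  | zero => omega
  | succ b ih =>
    intro hkb hbm
    have hbm' : b < m := hbm
    rcases Nat.lt_or_ge k b with hb | hb
    · -- step case : k < b
      have ihb := ih hb (le_of_lt hbm')
      have hψ0 : (fun v => traj f x0 (Function.update U k v) b) (U k) = traj f x0 U b := by
        simp only [Function.update_eq_self]
      have hDb : HasFDerivAt (fun y => f b (y, U b))
          (fderiv ℝ (fun y => f b (y, U b)) (traj f x0 U b))
          ((fun v => traj f x0 (Function.update U k v) b) (U k)) := by
        rw [hψ0]
        exact (((hf b hbm') _).comp _
          (DifferentiableAt.prodMk differentiableAt_id (differentiableAt_const _))).hasFDerivAt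
      have hcomp := hDb.comp (U k) ihb
      have heqf : (fun v => traj f x0 (Function.update U k v) (b+1)) =
          (fun y => f b (y, U b)) ∘ (fun v => traj f x0 (Function.update U k v) b) := by
        funext v
        simp only [traj, Function.comp]
        rw [Function.update_of_ne (by omega)]
      rw [heqf]
      have hjp : jacProd (fun j => fderiv ℝ (fun y => f j (y, U j)) (traj f x0 U j)) (k+1) (b+1)
          = (fderiv ℝ (fun y => f b (y, U b)) (traj f x0 U b)).comp
            (jacProd (fun j => fderiv ℝ (fun y => f j (y, U j)) (traj f x0 U j)) (k+1) b) := by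
        simp only [jacProd]
        rw [if_pos (by omega : k+1 ≤ b)]
      rw [hjp, ContinuousLinearMap.comp_assoc]
      exact hcomp
    · -- base case : b = k
      have hbk : b = k := by omega
      subst hbk
      have heqf : (fun v => traj f x0 (Function.update U b v) (b+1)) =
          (fun v => f b (traj f x0 U b, v)) := by
        funext v
        simp only [traj, Function.update_self]
        rw [show traj f x0 (Function.update U b v) b = traj f x0 U b from
          traj_congr b fun i hi => Function.update_of_ne (by omega) _ _]
      rw [heqf]
      have hjp : jacProd (fun j => fderiv ℝ (fun y => f j (y, U j)) (traj f x0 U j)) (b+1) (b+1)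
          = ContinuousLinearMap.id ℝ _ := by
        simp only [jacProd]
        rw [if_neg (by omega)]
      rw [hjp, ContinuousLinearMap.id_comp]
      exact (((hf b hbm') _).comp _
        (DifferentiableAt.prodMk (differentiableAt_const _) differentiableAt_id)).hasFDerivAt

end MyAux


theorem worst_fluctuation_formula {n p m : ℕ} (hm : 1 ≤ m)
    (f : ℕ → EuclideanSpace ℝ (Fin n) × EuclideanSpace ℝ (Fin p) → EuclideanSpace ℝ (Fin n))
    (x0 : EuclideanSpace ℝ (Fin n)) (ε : ℝ) (hε : 0 < ε)
    (hf : ∀ k < m, Differentiable ℝ (f k))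
    (ustar : Fin m → EuclideanSpace ℝ (Fin p))
    (hmin : IsLocalMin (cost m f x0 ε) ustar) :
    ∀ k (hk : k < m),
      ustar ⟨k, hk⟩ =
        (-(1 / ε)) •
          (ContinuousLinearMap.adjoint
            (fderiv ℝ (fun v => f k (traj f x0 (extCtrl m ustar) k, v)) (extCtrl m ustar k)))
          ((ContinuousLinearMap.adjoint
              (jacProd (fun j =>
                fderiv ℝ (fun y => f j (y, extCtrl m ustar j)) (traj f x0 (extCtrl m ustar) j))
                (k + 1) m))
            (traj f x0 (extCtrl m ustar) m)) := by
  intro k hk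
  classical
  set U := extCtrl m ustar with hU
  set i : Fin m := ⟨k, hk⟩ with hi
  have hv0 : U k = ustar i := by simp [hU, extCtrl, hk, hi]
  set v0 := U k with hv0def
  set D := fun j => fderiv ℝ (fun y => f j (y, U j)) (traj f x0 U j) with hD
  set B := fderiv ℝ (fun v => f k (traj f x0 U k, v)) v0 with hB
  set J := jacProd D (k+1) m with hJ
  set A := J.comp B with hA
  set xm := traj f x0 U m with hxm
  -- derivative of the trajectory wrt u_k
  have hAt : HasFDerivAt (fun v => traj f x0 (Function.update U k v) m) A v0 :=
    traj_deriv hf U k hk m (by omega) le_rfl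
  -- updating the finite control corresponds to updating the extended control
  have hext : ∀ v, extCtrl m (Function.update ustar i v) = Function.update U k v := by
    intro v; funext j
    by_cases hj : j < m
    · by_cases hjk : j = k
      · subst hjk
        simp only [extCtrl, dif_pos hj, Function.update_self]
        exact Function.update_self _ _ _
      · rw [Function.update_of_ne hjk]
        simp only [hU, extCtrl, dif_pos hj]
        rw [Function.update_of_ne (by simp [hi, Fin.ext_iff, hjk])]
    · rw [Function.update_of_ne (by omega)]
      simp only [hU, extCtrl, dif_neg hj]
  -- the control-cost term
  set C := ∑ j ∈ Finset.univ \ {i}, ‖ustar j‖^2 with hC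
  have hsumf : ∀ v : EuclideanSpace ℝ (Fin p),
      ∑ j : Fin m, ‖Function.update ustar i v j‖^2 = ‖v‖^2 + C := by
    intro v
    have h1 : (fun j => ‖Function.update ustar i v j‖^2)
        = Function.update (fun j => ‖ustar j‖^2) i (‖v‖^2) := by
      funext j
      by_cases h : j = i
      · subst h; simp
      · rw [Function.update_of_ne h, Function.update_of_ne h]
    rw [show ∑ j : Fin m, ‖Function.update ustar i v j‖^2
        = ∑ j : Fin m, Function.update (fun j => ‖ustar j‖^2) i (‖v‖^2) j from
      Finset.sum_congr rfl fun j _ => congrFun h1 j]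
    exact Finset.sum_update_of_mem (Finset.mem_univ i) _ _
  -- rewriting the cost along the one-parameter family
  have hcost : ∀ v, cost m f x0 ε (Function.update ustar i v)
      = (inner ℝ (traj f x0 (Function.update U k v) m) (traj f x0 (Function.update U k v) m) : ℝ)
        + ε * ((inner ℝ v v : ℝ) + C) := by
    intro v
    simp only [cost, hext v, hsumf v]
    rw [real_inner_self_eq_norm_sq, real_inner_self_eq_norm_sq]
  -- local minimality in the v variable
  have hupd0 : Function.update ustar i v0 = ustar := by
    rw [hv0]; exact Function.update_eq_self i ustar
  have htend : Filter.Tendsto (fun v => Function.update ustar i v) (nhds v0) (nhds ustar) := by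
    have hc : Continuous (fun v : EuclideanSpace ℝ (Fin p) => Function.update ustar i v) :=
      continuous_const.update i continuous_id
    have := hc.tendsto v0
    rwa [hupd0] at this
  have hgmin : IsLocalMin (fun v => cost m f x0 ε (Function.update ustar i v)) v0 := by
    have h1 : IsMinFilter (cost m f x0 ε) (nhds ustar) (Function.update ustar i v0) := by
      rw [hupd0]; exact hmin
    exact h1.comp_tendsto htend
  -- derivative of the one-variable cost
  have hq : HasFDerivAt (fun v : EuclideanSpace ℝ (Fin p) => (inner ℝ v v : ℝ))
      ((fderivInnerCLM ℝ (v0, v0)).comp ((ContinuousLinearMap.id ℝ _).prod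
        (ContinuousLinearMap.id ℝ _))) v0 :=
    (hasFDerivAt_id v0).inner ℝ (hasFDerivAt_id v0)
  have hPhi := hAt.inner ℝ hAt
  have hGsum := hPhi.add ((hq.add_const C).const_mul ε)
  have hgdef : (fun v => cost m f x0 ε (Function.update ustar i v))
      = fun v => (inner ℝ (traj f x0 (Function.update U k v) m)
          (traj f x0 (Function.update U k v) m) : ℝ) + ε * ((inner ℝ v v : ℝ) + C) :=
    funext hcost
  simp only [Pi.add_def] at hGsum
  rw [← hgdef] at hGsum
  have hzero := hgmin.fderiv_eq_zero
  rw [hGsum.fderiv] at hzero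
  have hψ0 : traj f x0 (Function.update U k v0) m = xm := by
    rw [hv0def, Function.update_eq_self]
  have hall : ∀ h, (inner ℝ xm (A h) : ℝ) + ε * (inner ℝ v0 h : ℝ) = 0 := by
    intro h
    have h2 := congrFun (congrArg DFunLike.coe hzero) h
    simp only [ContinuousLinearMap.add_apply, ContinuousLinearMap.zero_apply,
      ContinuousLinearMap.coe_comp', Function.comp_apply, ContinuousLinearMap.prod_apply,
      ContinuousLinearMap.coe_id', id_eq, fderivInnerCLM_apply,
      ContinuousLinearMap.smul_apply, smul_eq_mul, hψ0] at h2
    rw [real_inner_comm (A h) xm, real_inner_comm h v0] at h2 ⊢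
    linarith
  have key : ∀ h, (inner ℝ ((ContinuousLinearMap.adjoint A) xm + ε • v0) h : ℝ) = 0 := by
    intro h
    rw [inner_add_left, real_inner_smul_left, ContinuousLinearMap.adjoint_inner_left]
    linarith [hall h]
  have hzero2 : (ContinuousLinearMap.adjoint A) xm + ε • v0 = 0 :=
    inner_self_eq_zero.mp (key _)
  have h2 : ε • v0 = -((ContinuousLinearMap.adjoint A) xm) :=
    eq_neg_of_add_eq_zero_right hzero2
  have hv : v0 = (-(1/ε)) • ((ContinuousLinearMap.adjoint A) xm) := by
    calc v0 = (ε⁻¹ * ε) • v0 := by rw [inv_mul_cancel₀ hε.ne', one_smul]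
    _ = ε⁻¹ • (ε • v0) := by rw [mul_smul]
    _ = ε⁻¹ • -((ContinuousLinearMap.adjoint A) xm) := by rw [h2]
    _ = (-(1/ε)) • ((ContinuousLinearMap.adjoint A) xm) := by
        rw [smul_neg, ← neg_smul, one_div]
  rw [← hv0, hv, hA, ContinuousLinearMap.adjoint_comp]
  rfl
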